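/- Let G = G₀ *_H G₁ be a nondegenerate free product with amalgamation and suppose that the kernel ker G = ⋂_{g ∈ G} gHg⁻¹ is trivial. Then G is a weak* Powers group. -/

import Mathlib

variable {G : Type*} [Group G]

/-- `AltWord G₀ G₁ H j w`: the list `w` is an alternating word whose `i`-th letter lies in
`G_{(i+j) mod 2} \ H`. -/
def AltWord (G₀ G₁ H : Subgroup G) (j : ℕ) (w : List G) : Prop :=
  ∀ (i : ℕ) (hi : i < w.length),
    w.get ⟨i, hi⟩ ∈ (if (i + j) % 2 = 0 then (G₀ : Set G) else (G₁ : Set G)) \ (H : Set G)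

/-- `G` is the free product of its subgroups `G₀` and `G₁` amalgamated over their common
subgroup `H` (internal characterization: `G₀ ∩ G₁ = H`, the subgroups `G₀` and `G₁` generate
`G`, and no nonempty alternating word with letters in `G₀ \ H` and `G₁ \ H` has product
in `H`). -/
structure IsAmalgam (G₀ G₁ H : Subgroup G) : Prop where
  le_left : H ≤ G₀
  le_right : H ≤ G₁
  inf_eq : G₀ ⊓ G₁ = H
  closure_eq_top : Subgroup.closure ((G₀ : Set G) ∪ (G₁ : Set G)) = ⊤
  reduced : ∀ (j : ℕ) (w : List G), w ≠ [] → AltWord G₀ G₁ H j w → w.prod ∉ H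

/-- The amalgam `G₀ *_H G₁` is *nondegenerate*: `([G₀ : H] − 1) · ([G₁ : H] − 1) ≥ 2`,
i.e. `H` is a proper subgroup of both `G₀` and `G₁`, and has index at least `3` (possibly
infinite) in at least one of them. -/
def Nondegenerate (G₀ G₁ H : Subgroup G) : Prop :=
  H.relIndex G₀ ≠ 1 ∧ H.relIndex G₁ ≠ 1 ∧ ¬(H.relIndex G₀ = 2 ∧ H.relIndex G₁ = 2)

/-- `T_{j,k}`: the set of elements of `G` that are products of alternating words of length
`k` whose first letter lies in `G_j \ H`; by convention `T_{j,0} = H`. -/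
def TT (G₀ G₁ H : Subgroup G) (j k : ℕ) : Set G :=
  if k = 0 then (H : Set G)
  else {g | ∃ w : List G, w.length = k ∧ AltWord G₀ G₁ H j w ∧ w.prod = g}

/-- `C_{j,k} = ⋂_{g ∈ T_{j,k}} g H g⁻¹`. -/
def CC (G₀ G₁ H : Subgroup G) (j k : ℕ) : Set G :=
  ⋂ g ∈ TT G₀ G₁ H j k, {x | g⁻¹ * x * g ∈ H}

/-- `K_j = ⋂_{k ≥ 0} C_{j,k}`. -/
def KK (G₀ G₁ H : Subgroup G) (j : ℕ) : Set G :=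
  ⋂ k : ℕ, CC G₀ G₁ H j k

/-- The kernel of the amalgam, `ker G = ⋂_{g ∈ G} g H g⁻¹`, as a set. -/
def amalgamKerSet (H : Subgroup G) : Set G :=
  ⋂ g : G, {x | g⁻¹ * x * g ∈ H}

/-- A group `G` is a *weak\* Powers group* if for every `f ∈ G \ {e}` and every integer
`k ≥ 1` there exist a partition `G = D ⊔ E` and elements `g 1, …, g k ∈ G` such that
`f D ∩ D = ∅` and `g i E ∩ g j E = ∅` for all distinct `1 ≤ i, j ≤ k`. -/
def IsWeakStarPowersGroup (G : Type*) [Group G] : Prop :=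
  ∀ f : G, f ≠ 1 → ∀ k : ℕ, 1 ≤ k →
    ∃ (D E : Set G) (g : ℕ → G),
      D ∪ E = Set.univ ∧ D ∩ E = ∅ ∧
      ((fun x => f * x) '' D) ∩ D = ∅ ∧
      (∀ i j, 1 ≤ i → i ≤ k → 1 ≤ j → j ≤ k → i ≠ j →
        ((fun x => g i * x) '' E) ∩ ((fun x => g j * x) '' E) = ∅)

namespace WSP

/-- parity arithmetic -/
def endP (b : Bool) : ℕ → Bool
  | 0 => b
  | n + 1 => !(endP b n)

@[simp] lemma endP_zero (b : Bool) : endP b 0 = b := rfl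
@[simp] lemma endP_succ (b : Bool) (n : ℕ) : endP b (n + 1) = !(endP b n) := rfl

lemma endP_not (b : Bool) (n : ℕ) : endP (!b) n = !(endP b n) := by
  induction n with
  | zero => rfl
  | succ n ih => simp [ih]

lemma endP_add (b : Bool) (m n : ℕ) : endP b (m + n) = endP (endP b m) n := by
  induction n with
  | zero => rfl
  | succ n ih => simp [← Nat.add_assoc, ih]

@[simp] lemma endP_two_mul (b : Bool) (n : ℕ) : endP b (2 * n) = b := by
  induction n with
  | zero => rfl
  | succ n ih => simpa [Nat.mul_succ] using ih

lemma endP_even (b : Bool) {n : ℕ} (h : Even n) : endP b n = b := by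
  obtain ⟨m, rfl⟩ := h
  simpa [two_mul] using endP_two_mul b m

lemma endP_odd (b : Bool) {n : ℕ} (h : Odd n) : endP b n = !b := by
  obtain ⟨m, rfl⟩ := h
  simp [endP_add, endP_two_mul]

section Amalgam

variable (G₀ G₁ H : Subgroup G)

def Fa (b : Bool) : Subgroup G := bif b then G₁ else G₀

/-- alternating words, `b` is the parity of the first letter -/
inductive Alt : Bool → List G → Prop
  | nil (b : Bool) : Alt b []
  | cons {b : Bool} {x : G} {w : List G} :
      x ∈ Fa G₀ G₁ b → x ∉ H → Alt (!b) w → Alt b (x :: w)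

variable {G₀ G₁ H}

lemma H_le_Fa (ha : IsAmalgam G₀ G₁ H) (b : Bool) : H ≤ Fa G₀ G₁ b := by
  cases b
  · exact ha.le_left
  · exact ha.le_right

lemma alt_singleton {b : Bool} {x : G} (hx : x ∈ Fa G₀ G₁ b) (hxH : x ∉ H) :
    Alt G₀ G₁ H b [x] :=
  Alt.cons hx hxH (Alt.nil _)

lemma alt_append {b : Bool} {v w : List G} (hv : Alt G₀ G₁ H b v)
    (hw : Alt G₀ G₁ H (endP b v.length) w) : Alt G₀ G₁ H b (v ++ w) := by
  induction hv with
  | nil b => simpa using hw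
  | @cons b x t hx hxH ht ih =>
      refine Alt.cons hx hxH (ih ?_)
      rw [List.length_cons, endP_succ, ← endP_not] at hw
      exact hw

lemma alt_concat_decomp {b : Bool} {w : List G} (hw : Alt G₀ G₁ H b w) (hne : w ≠ []) :
    ∃ w' x, w = w' ++ [x] ∧ Alt G₀ G₁ H b w' ∧
      x ∈ Fa G₀ G₁ (endP b w'.length) ∧ x ∉ H := by
  induction hw with
  | nil b => exact absurd rfl hne
  | @cons b x t hx hxH ht ih =>
      rcases eq_or_ne t [] with rfl | htne
      · exact ⟨[], x, rfl, Alt.nil _, by simpa using hx, hxH⟩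
      · obtain ⟨t', y, rfl, ht', hy, hyH⟩ := ih htne
        refine ⟨x :: t', y, rfl, Alt.cons hx hxH ht', ?_, hyH⟩
        rw [List.length_cons, endP_succ, ← endP_not]
        exact hy

/-- bridge to the pinned `AltWord` -/
lemma alt_altWord {b : Bool} {w : List G} (hw : Alt G₀ G₁ H b w) :
    AltWord G₀ G₁ H (bif b then 1 else 0) w := by
  induction hw with
  | nil b => intro i hi; simp at hi
  | @cons b x t hx hxH ht ih =>
      intro i hi
      match i with
      | 0 =>
          simp only [List.get]
          constructor
          · cases b <;> simpa [Fa] using hx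
          · exact hxH
      | (i' + 1) =>
          have hi' : i' < t.length := by simpa using hi
          have := ih i' hi'
          simp only [List.get]
          have hmod : (i' + 1 + (bif b then 1 else 0)) % 2
              = (i' + (bif !b then 1 else 0)) % 2 := by
            cases b <;> simp <;> omega
          rw [hmod]
          exact this

lemma reduced' (ha : IsAmalgam G₀ G₁ H) {b : Bool} {w : List G}
    (hw : Alt G₀ G₁ H b w) (hne : w ≠ []) : w.prod ∉ H :=
  ha.reduced _ w hne (alt_altWord hw)

lemma alt_revInv {b : Bool} {w : List G} (hw : Alt G₀ G₁ H b w) :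
    Alt G₀ G₁ H (endP b (w.length + 1)) (w.reverse.map fun x => x⁻¹) := by
  induction hw with
  | nil b => exact Alt.nil _
  | @cons b x t hx hxH ht ih =>
      have h1 : ((x :: t).reverse.map fun x => x⁻¹)
          = (t.reverse.map fun x => x⁻¹) ++ [x⁻¹] := by simp
      rw [h1]
      have hlen : (t.reverse.map fun x : G => x⁻¹).length = t.length := by simp
      have hstart : endP b (t.length + 1 + 1) = endP (!b) (t.length + 1) := by
        simp [endP_not]
      rw [List.length_cons, hstart]
      refine alt_append ih (alt_singleton ?_ (by simpa using hxH))
      rw [hlen, ← endP_add]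
      have : t.length + 1 + t.length = 2 * t.length + 1 := by omega
      rw [this, endP_succ, endP_two_mul, Bool.not_not]
      exact inv_mem hx

lemma prod_revInv (w : List G) : (w.reverse.map fun x : G => x⁻¹).prod = w.prod⁻¹ := by
  rw [List.prod_inv_reverse]
  rw [List.map_reverse]

lemma nf (ha : IsAmalgam G₀ G₁ H) :
    ∀ (v : List G) {b c : Bool} (w : List G), Alt G₀ G₁ H b v → Alt G₀ G₁ H c w →
      v.prod⁻¹ * w.prod ∈ H →
      v.length = w.length ∧ (v ≠ [] → b = c) ∧
      ∀ p, ((v.take p).prod)⁻¹ * (w.take p).prod ∈ H := by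
  intro v
  induction v with
  | nil =>
      intro b c w _ hw hH
      have hw0 : w = [] := by
        by_contra hne
        exact reduced' ha hw hne (by simpa using hH)
      subst hw0
      exact ⟨rfl, fun h => absurd rfl h, fun p => by simpa using one_mem H⟩
  | cons x t ih =>
      intro b c w hv hw hH
      cases hv with
      | cons hx hxH ht =>
      have hwne : w ≠ [] := by
        rintro rfl
        refine reduced' ha (Alt.cons hx hxH ht) (by simp) ?_
        have : ((x :: t).prod)⁻¹ ∈ H := by simpa using hH
        simpa using inv_mem this
      obtain ⟨y, s, rfl⟩ := List.exists_cons_of_ne_nil hwne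
      cases hw with
      | cons hy hyH hs =>
      -- same starting parity
      have hbc : b = c := by
        by_contra hne
        have hc : c = !b := by cases b <;> cases c <;> simp_all
        subst hc
        have h1 := alt_revInv (Alt.cons hx hxH ht)
        have h2 : Alt G₀ G₁ H
            (endP (endP b ((x :: t).length + 1)) (((x :: t).reverse.map fun z => z⁻¹).length))
            (y :: s) := by
          have hl : (((x :: t).reverse.map fun z : G => z⁻¹)).length = (x :: t).length := by
            simp
          rw [hl, ← endP_add]
          have : (x :: t).length + 1 + (x :: t).length = 2 * (x :: t).length + 1 := by omega
          rw [this, endP_succ, endP_two_mul]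
          exact Alt.cons hy hyH hs
        have h3 := alt_append h1 h2
        refine reduced' ha h3 (by simp) ?_
        rw [List.prod_append, prod_revInv]
        exact hH
      subst hbc
      -- first letters in the same H-coset
      have hxy : x⁻¹ * y ∈ H := by
        by_contra hxyH
        have h1 := alt_revInv ht
        have h2 : Alt G₀ G₁ H
            (endP (endP (!b) (t.length + 1)) ((t.reverse.map fun z : G => z⁻¹).length))
            ((x⁻¹ * y) :: s) := by
          have hl : ((t.reverse.map fun z : G => z⁻¹)).length = t.length := by simp
          rw [hl, ← endP_add]
          have : t.length + 1 + t.length = 2 * t.length + 1 := by omega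
          rw [this, endP_succ, endP_two_mul, Bool.not_not]
          exact Alt.cons (mul_mem (inv_mem hx) hy) hxyH hs
        have h3 := alt_append h1 h2
        refine reduced' ha h3 (by simp) ?_
        rw [List.prod_append, prod_revInv, List.prod_cons]
        have he : t.prod⁻¹ * (x⁻¹ * y * s.prod) = (x * t.prod)⁻¹ * (y * s.prod) := by
          group
        rw [he]
        simpa using hH
      rcases eq_or_ne s [] with rfl | hsne
      · -- w = [y] : then t = []
        have htH : t.prod ∈ H := by
          have h1 : t.prod⁻¹ * (x⁻¹ * y) ∈ H := by
            have he : t.prod⁻¹ * (x⁻¹ * y) = (x * t.prod)⁻¹ * (y * 1) := by group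
            rw [he]; simpa using hH
          have h2 := inv_mem (mul_mem h1 (inv_mem hxy))
          have he2 : (t.prod⁻¹ * (x⁻¹ * y) * (x⁻¹ * y)⁻¹)⁻¹ = t.prod := by group
          rwa [he2] at h2
        have ht0 : t = [] := by
          by_contra hne
          exact reduced' ha ht hne htH
        subst ht0
        refine ⟨rfl, fun _ => rfl, ?_⟩
        intro p
        match p with
        | 0 => simpa using one_mem H
        | p + 1 => simpa using hxy
      · obtain ⟨z, s₂, rfl⟩ := List.exists_cons_of_ne_nil hsne
        cases hs with
        | cons hz hzH hs₂ =>
        have hw' : Alt G₀ G₁ H (!b) ((x⁻¹ * y * z) :: s₂) := by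
          refine Alt.cons (mul_mem (H_le_Fa ha (!b) hxy) hz) ?_ hs₂
          intro hmem
          have h2 := mul_mem (inv_mem hxy) hmem
          have he2 : (x⁻¹ * y)⁻¹ * (x⁻¹ * y * z) = z := by group
          rw [he2] at h2
          exact hzH h2
        have hH' : t.prod⁻¹ * ((x⁻¹ * y * z) :: s₂).prod ∈ H := by
          have he : t.prod⁻¹ * ((x⁻¹ * y * z) * s₂.prod)
              = (x * t.prod)⁻¹ * (y * (z * s₂.prod)) := by group
          rw [List.prod_cons, he]
          simpa using hH
        obtain ⟨hlen, _, hpre⟩ := ih ((x⁻¹ * y * z) :: s₂) ht hw' hH'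
        refine ⟨by simp at hlen ⊢; omega, fun _ => rfl, ?_⟩
        intro p
        match p with
        | 0 => simpa using one_mem H
        | 1 => simpa using hxy
        | p + 2 =>
            have h2 := hpre (p + 1)
            have he1 : (((x⁻¹ * y * z) :: s₂).take (p + 1)).prod
                = (x⁻¹ * y) * (((z :: s₂).take (p + 1 + 1 - 1)).prod) := by
              simp [List.take_succ_cons, List.prod_cons, mul_assoc]
            have he2 : (((x :: t)).take (p + 2)).prod = x * ((t.take (p + 1)).prod) := by
              simp [List.take_succ_cons]
            have he3 : (((y :: z :: s₂)).take (p + 2)).prod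
                = y * (((z :: s₂).take (p + 1)).prod) := by
              simp [List.take_succ_cons]
            rw [he2, he3]
            have he4 : (x * (t.take (p + 1)).prod)⁻¹ * (y * ((z :: s₂).take (p + 1)).prod)
                = ((t.take (p + 1)).prod)⁻¹ *
                  ((x⁻¹ * y) * ((z :: s₂).take (p + 1)).prod) := by group
            rw [he4]
            rw [he1] at h2
            simpa using h2

variable (G₀ G₁ H) in
/-- products of nonempty alternating words of starting parity `b` -/
def EE (b : Bool) : Set G :=
  {g | ∃ w : List G, Alt G₀ G₁ H b w ∧ w ≠ [] ∧ w.prod = g}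

lemma H_notmem_EE (ha : IsAmalgam G₀ G₁ H) {g : G} (hg : g ∈ H) (b : Bool) :
    g ∉ EE G₀ G₁ H b := by
  rintro ⟨w, hw, hne, rfl⟩
  exact reduced' ha hw hne hg

lemma EE_disj (ha : IsAmalgam G₀ G₁ H) {g : G} (h0 : g ∈ EE G₀ G₁ H false)
    (h1 : g ∈ EE G₀ G₁ H true) : False := by
  obtain ⟨w, hw, hne, rfl⟩ := h0
  obtain ⟨v, hv, hvne, hvp⟩ := h1
  obtain ⟨-, hpar, -⟩ := nf ha v (b := true) (c := false) w hv hw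
    (by rw [hvp]; simpa using one_mem H)
  simpa using hpar hvne

lemma mem_EE_H_mul (ha : IsAmalgam G₀ G₁ H) {h g : G} (hh : h ∈ H) {b : Bool}
    (hg : g ∈ EE G₀ G₁ H b) : h * g ∈ EE G₀ G₁ H b := by
  obtain ⟨w, hw, hne, rfl⟩ := hg
  obtain ⟨y, t, rfl⟩ := List.exists_cons_of_ne_nil hne
  cases hw with
  | cons hy hyH ht =>
    refine ⟨(h * y) :: t, Alt.cons (mul_mem (H_le_Fa ha b hh) hy) ?_ ht, by simp, by
      simp [mul_assoc]⟩
    intro hmem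
    exact hyH (by simpa using mul_mem (inv_mem hh) hmem)

lemma mul_mem_cover (ha : IsAmalgam G₀ G₁ H) {x g : G} {b : Bool}
    (hx : x ∈ Fa G₀ G₁ b) (hxH : x ∉ H)
    (hg : g ∈ (H : Set G) ∪ EE G₀ G₁ H false ∪ EE G₀ G₁ H true) :
    x * g ∈ (H : Set G) ∪ EE G₀ G₁ H false ∪ EE G₀ G₁ H true := by
  have hEE : ∀ c : Bool, x * g ∈ EE G₀ G₁ H c →
      x * g ∈ (H : Set G) ∪ EE G₀ G₁ H false ∪ EE G₀ G₁ H true := by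
    intro c hc
    cases c
    · exact Or.inl (Or.inr hc)
    · exact Or.inr hc
  have hcase : g ∈ H ∨ ∃ c : Bool, g ∈ EE G₀ G₁ H c := by
    rcases hg with (hg | hg) | hg
    · exact Or.inl hg
    · exact Or.inr ⟨false, hg⟩
    · exact Or.inr ⟨true, hg⟩
  rcases hcase with hg' | ⟨c, hg'⟩
  · -- g ∈ H
    refine hEE b ⟨[x * g], alt_singleton (mul_mem hx (H_le_Fa ha b hg')) ?_, by simp, by simp⟩
    intro hmem
    exact hxH (by simpa using mul_mem hmem (inv_mem hg'))
  rcases eq_or_ne c b with rfl | hne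
  · -- same parity : may cancel
    obtain ⟨w, hw, hne', rfl⟩ := hg'
    obtain ⟨y, t, rfl⟩ := List.exists_cons_of_ne_nil hne'
    cases hw with
    | cons hy hyH ht =>
      by_cases hxyH : x * y ∈ H
      · rcases eq_or_ne t [] with rfl | htne
        · exact Or.inl (Or.inl (by simpa using hxyH))
        · refine hEE (!c) ?_
          have : (x * y) * t.prod ∈ EE G₀ G₁ H (!c) :=
            mem_EE_H_mul ha hxyH ⟨t, ht, htne, rfl⟩
          simpa [mul_assoc] using this
      · refine hEE c ⟨(x * y) :: t, Alt.cons (mul_mem hx hy) hxyH ht, by simp, by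
          simp [mul_assoc]⟩
  · -- opposite parity : prepend
    have hc : c = !b := by cases b <;> cases c <;> simp_all
    subst hc
    obtain ⟨w, hw, hne', rfl⟩ := hg'
    exact hEE b ⟨x :: w, Alt.cons hx hxH hw, by simp, by simp⟩

lemma cover (ha : IsAmalgam G₀ G₁ H) (g : G) :
    g ∈ (H : Set G) ∪ EE G₀ G₁ H false ∪ EE G₀ G₁ H true := by
  have hg : g ∈ Subgroup.closure ((G₀ : Set G) ∪ (G₁ : Set G)) := by
    rw [ha.closure_eq_top]; trivial
  induction hg using Subgroup.closure_induction_left with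
  | one => exact Or.inl (Or.inl (one_mem H))
  | mul_left x hx y hy ih =>
      by_cases hxH : x ∈ H
      · rcases ih with (ih' | ih') | ih'
        · exact Or.inl (Or.inl (mul_mem hxH ih'))
        · exact Or.inl (Or.inr (mem_EE_H_mul ha hxH ih'))
        · exact Or.inr (mem_EE_H_mul ha hxH ih')
      · rcases hx with hx | hx
        · exact mul_mem_cover ha (b := false) hx hxH ih
        · exact mul_mem_cover ha (b := true) hx hxH ih
  | inv_mul_cancel x hx y hy ih =>
      by_cases hxH : x⁻¹ ∈ H
      · rcases ih with (ih' | ih') | ih'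
        · exact Or.inl (Or.inl (mul_mem hxH ih'))
        · exact Or.inl (Or.inr (mem_EE_H_mul ha hxH ih'))
        · exact Or.inr (mem_EE_H_mul ha hxH ih')
      · rcases hx with hx | hx
        · exact mul_mem_cover ha (b := false) (inv_mem hx) hxH ih
        · exact mul_mem_cover ha (b := true) (inv_mem hx) hxH ih

variable (G₀ G₁ H) in
/-- elements admitting an alternating word of length `≥ n` whose `n`-prefix has product in `A` -/
def Pref (n : ℕ) (A : Set G) : Set G :=
  {g | ∃ (b : Bool) (w : List G), Alt G₀ G₁ H b w ∧ w.prod = g ∧ n ≤ w.length ∧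
    (w.take n).prod ∈ A}

lemma pref_disjoint (ha : IsAmalgam G₀ G₁ H) {n : ℕ} {A A' : Set G}
    (hAA : ∀ a ∈ A, ∀ a' ∈ A', a⁻¹ * a' ∉ H) :
    Pref G₀ G₁ H n A ∩ Pref G₀ G₁ H n A' = ∅ := by
  ext g
  simp only [Set.mem_inter_iff, Set.mem_empty_iff_false, iff_false, not_and]
  rintro ⟨b, w, hw, rfl, hn, hA⟩ ⟨b', w', hw', hp', hn', hA'⟩
  obtain ⟨-, -, hpre⟩ := nf ha w (b := b) (c := b') w' hw hw' (by rw [hp']; simpa using one_mem H)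
  exact hAA _ hA _ hA' (hpre n)

def rep2 (x y : G) : ℕ → List G
  | 0 => []
  | n + 1 => x :: y :: rep2 x y n

@[simp] lemma rep2_length (x y : G) (n : ℕ) : (rep2 x y n).length = 2 * n := by
  induction n with
  | zero => rfl
  | succ n ih => simp [rep2, ih]; omega

@[simp] lemma rep2_prod (x y : G) (n : ℕ) : (rep2 x y n).prod = (x * y) ^ n := by
  induction n with
  | zero => simp [rep2]
  | succ n ih => simp [rep2, ih, pow_succ, pow_mul_comm', mul_assoc]

lemma alt_rep2 {b : Bool} {x y : G} (hx : x ∈ Fa G₀ G₁ b) (hxH : x ∉ H)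
    (hy : y ∈ Fa G₀ G₁ (!b)) (hyH : y ∉ H) (n : ℕ) :
    Alt G₀ G₁ H b (rep2 x y n) := by
  induction n with
  | zero => exact Alt.nil b
  | succ n ih =>
      exact Alt.cons hx hxH (Alt.cons (by simpa using hy) hyH (by simpa using ih))

/-- three cosets : if the relative index is not 1 or 2 there is an element outside
`H ∪ xH`. -/
lemma exists_third {K : Subgroup G} (hle : H ≤ K) (h1 : H.relIndex K ≠ 1)
    (h2 : H.relIndex K ≠ 2) {x : G} (hx : x ∈ K) :
    ∃ d, d ∈ K ∧ d ∉ H ∧ x⁻¹ * d ∉ H := by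
  by_contra hcon
  push_neg at hcon
  set Hs := H.subgroupOf K with hHs
  have hmem : ∀ z : K, z ∈ Hs ↔ (z : G) ∈ H := fun z => Subgroup.mem_subgroupOf
  have hsurj : Function.Surjective
      (fun i : Fin 2 => (if i = 0 then ((1 : K) : K ⧸ Hs) else ((⟨x, hx⟩ : K) : K ⧸ Hs))) := by
    rintro q
    induction q using QuotientGroup.induction_on with
    | H z =>
      by_cases hz : (z : G) ∈ H
      · refine ⟨0, ?_⟩
        simp only [if_pos rfl]
        refine (QuotientGroup.eq).2 ?_
        rw [hmem]
        simpa using inv_mem hz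
      · have hxz : x⁻¹ * (z : G) ∈ H := hcon (z : G) z.2 hz
        refine ⟨1, ?_⟩
        simp only [one_ne_zero, if_neg (by decide : (1 : Fin 2) ≠ 0)]
        refine (QuotientGroup.eq).2 ?_
        rw [hmem]
        simpa using hxz
  have hfin : Finite (K ⧸ Hs) := Finite.of_surjective _ hsurj
  have hcard : Nat.card (K ⧸ Hs) ≤ 2 := by
    have := Nat.card_le_card_of_surjective _ hsurj
    simpa using this
  have hpos : 0 < Nat.card (K ⧸ Hs) := Nat.card_pos
  have hidx : H.relIndex K = Nat.card (K ⧸ Hs) := rfl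
  omega

lemma exists_notin {K : Subgroup G} (h1 : H.relIndex K ≠ 1) :
    ∃ e, e ∈ K ∧ e ∉ H := by
  by_contra hcon
  push_neg at hcon
  exact h1 (Subgroup.relIndex_eq_one.2 hcon)

section Core

variable {β : Bool} {c₁ c₂ e : G}

lemma core_word (hc₁ : c₁ ∈ Fa G₀ G₁ β) (hc₁H : c₁ ∉ H)
    (hc₂ : c₂ ∈ Fa G₀ G₁ β) (hc₂H : c₂ ∉ H) (hcc : c₂⁻¹ * c₁ ∉ H)
    (he : e ∈ Fa G₀ G₁ (!β)) (heH : e ∉ H) (s t : ℕ) :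
    ∃ Z : List G, Alt G₀ G₁ H (!β) Z ∧ Z ≠ [] ∧ Odd Z.length ∧
      Z.prod = ((c₂ * e) ^ (s + t + 1))⁻¹ * (c₁ * e) ^ (t + 1) * (c₂ * e) ^ s := by
  refine ⟨rep2 e⁻¹ c₂⁻¹ (s + t) ++ (e⁻¹ :: (c₂⁻¹ * c₁) :: e ::
      (rep2 c₁ e t ++ rep2 c₂ e s)), ?_, by simp, ?_, ?_⟩
  · refine alt_append (alt_rep2 (inv_mem he) (fun h => heH (by simpa using inv_mem h))
      (by simpa using inv_mem hc₂) (fun h => hc₂H (by simpa using inv_mem h)) (s + t)) ?_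
    rw [rep2_length, endP_two_mul]
    refine Alt.cons (inv_mem he) (fun h => heH (by simpa using inv_mem h)) ?_
    refine Alt.cons (by simpa using mul_mem (inv_mem hc₂) hc₁) hcc ?_
    refine Alt.cons (by simpa using he) heH ?_
    have : (!(!(!(!β)))) = β := by simp
    rw [this]
    refine alt_append (alt_rep2 hc₁ hc₁H (by simpa using he) heH t) ?_
    rw [rep2_length, endP_two_mul]
    exact alt_rep2 hc₂ hc₂H (by simpa using he) heH s
  · simp only [List.length_append, rep2_length, List.length_cons]
    exact ⟨(s + t) + t + s + 1, by omega⟩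
  · simp only [List.prod_append, List.prod_cons, rep2_prod]
    have h1 : (e⁻¹ * c₂⁻¹) ^ (s + t) = ((c₂ * e) ^ (s + t))⁻¹ := by
      rw [← mul_inv_rev, inv_pow]
    rw [h1]
    have h2 : (c₂ * e) ^ (s + t + 1) = (c₂ * e) * (c₂ * e) ^ (s + t) := pow_succ' _ _
    have h3 : (c₁ * e) ^ (t + 1) = (c₁ * e) * (c₁ * e) ^ t := pow_succ' _ _
    rw [h2, h3, mul_inv_rev, mul_inv_rev]
    simp [mul_assoc]

lemma core_notH (ha : IsAmalgam G₀ G₁ H) (hc₁ : c₁ ∈ Fa G₀ G₁ β) (hc₁H : c₁ ∉ H)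
    (hc₂ : c₂ ∈ Fa G₀ G₁ β) (hc₂H : c₂ ∉ H) (hcc : c₂⁻¹ * c₁ ∉ H)
    (he : e ∈ Fa G₀ G₁ (!β)) (heH : e ∉ H) (s t : ℕ) {d₁ d₂ : G}
    (hd₁ : d₁ ∈ Fa G₀ G₁ β) (hd₁H : d₁ ∉ H) (hd₂ : d₂ ∈ Fa G₀ G₁ β) (hd₂H : d₂ ∉ H) :
    d₁ * (((c₂ * e) ^ (s + t + 1))⁻¹ * (c₁ * e) ^ (t + 1) * (c₂ * e) ^ s) * d₂ ∉ H := by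
  obtain ⟨Z, hZ, hZne, hZodd, hZprod⟩ := core_word (H := H) hc₁ hc₁H hc₂ hc₂H hcc he heH s t
  have halt : Alt G₀ G₁ H β (d₁ :: (Z ++ [d₂])) := by
    refine Alt.cons hd₁ hd₁H ?_
    refine alt_append hZ ?_
    rw [endP_odd _ hZodd, Bool.not_not]
    exact alt_singleton hd₂ hd₂H
  have := reduced' ha halt (by simp)
  rw [List.prod_cons, List.prod_append, List.prod_singleton, hZprod] at this
  simpa [mul_assoc] using this

lemma core_notH₀ (ha : IsAmalgam G₀ G₁ H) (hc₁ : c₁ ∈ Fa G₀ G₁ β) (hc₁H : c₁ ∉ H)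
    (hc₂ : c₂ ∈ Fa G₀ G₁ β) (hc₂H : c₂ ∉ H) (hcc : c₂⁻¹ * c₁ ∉ H)
    (he : e ∈ Fa G₀ G₁ (!β)) (heH : e ∉ H) (s t : ℕ) :
    ((c₂ * e) ^ (s + t + 1))⁻¹ * (c₁ * e) ^ (t + 1) * (c₂ * e) ^ s ∉ H := by
  obtain ⟨Z, hZ, hZne, hZodd, hZprod⟩ := core_word (H := H) hc₁ hc₁H hc₂ hc₂H hcc he heH s t
  rw [← hZprod]
  exact reduced' ha hZ hZne

end Core

section Cases

lemma sandwich {h₁ h₂ m : G} (hh₁ : h₁ ∈ H) (hh₂ : h₂ ∈ H)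
    (hm : h₁ * m * h₂ ∈ H) : m ∈ H := by
  have := mul_mem (mul_mem (inv_mem hh₁) hm) (inv_mem hh₂)
  have he : h₁⁻¹ * (h₁ * m * h₂) * h₂⁻¹ = m := by group
  rwa [he] at this

lemma glue {E : Set G} {gfun : ℕ → G} {n : ℕ} {A : ℕ → Set G} (k : ℕ)
    (hsub : ∀ i, 1 ≤ i → i ≤ k → ∀ x ∈ E, gfun i * x ∈ Pref G₀ G₁ H n (A i))
    (hcross : ∀ i j, 1 ≤ i → i ≤ k → 1 ≤ j → j ≤ k → i < j →
      Pref G₀ G₁ H n (A i) ∩ Pref G₀ G₁ H n (A j) = ∅) :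
    ∀ i j, 1 ≤ i → i ≤ k → 1 ≤ j → j ≤ k → i ≠ j →
      ((fun x => gfun i * x) '' E) ∩ ((fun x => gfun j * x) '' E) = ∅ := by
  have key : ∀ i j, 1 ≤ i → i ≤ k → 1 ≤ j → j ≤ k → i < j →
      ((fun x => gfun i * x) '' E) ∩ ((fun x => gfun j * x) '' E) = ∅ := by
    intro i j hi1 hik hj1 hjk hij
    ext z
    simp only [Set.mem_inter_iff, Set.mem_image, Set.mem_empty_iff_false, iff_false, not_and]
    rintro ⟨x, hx, rfl⟩ ⟨y, hy, hee⟩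
    have h1 : gfun i * x ∈ Pref G₀ G₁ H n (A i) := hsub i hi1 hik x hx
    have h2 : gfun i * x ∈ Pref G₀ G₁ H n (A j) := by
      rw [← hee]; exact hsub j hj1 hjk y hy
    have hc := hcross i j hi1 hik hj1 hjk hij
    have : gfun i * x ∈ Pref G₀ G₁ H n (A i) ∩ Pref G₀ G₁ H n (A j) := ⟨h1, h2⟩
    rw [hc] at this
    exact this
  intro i j hi1 hik hj1 hjk hij
  rcases lt_or_gt_of_ne hij with h | h
  · exact key i j hi1 hik hj1 hjk h
  · rw [Set.inter_comm]
    exact key j i hj1 hjk hi1 hik h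

lemma mul_mem_pref {b q : Bool} {u w : List G} (hu : Alt G₀ G₁ H b u)
    (hw : Alt G₀ G₁ H q w) (hq : q = endP b u.length) {A : Set G} (hA : u.prod ∈ A) :
    u.prod * w.prod ∈ Pref G₀ G₁ H u.length A := by
  refine ⟨b, u ++ w, alt_append hu (hq ▸ hw), by simp, by simp, ?_⟩
  rw [List.take_left]
  exact hA

end Cases

section Families

lemma cover3 (ha : IsAmalgam G₀ G₁ H) (b : Bool) (g : G) :
    g ∈ (H : Set G) ∨ g ∈ EE G₀ G₁ H b ∨ g ∈ EE G₀ G₁ H (!b) := by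
  have := cover ha g
  cases b
  · rcases this with (h | h) | h
    · exact Or.inl h
    · exact Or.inr (Or.inl h)
    · exact Or.inr (Or.inr h)
  · rcases this with (h | h) | h
    · exact Or.inl h
    · exact Or.inr (Or.inr h)
    · exact Or.inr (Or.inl h)

lemma U_alt {β : Bool} {c₁ c₂ e d : G} (hc₁ : c₁ ∈ Fa G₀ G₁ β) (hc₁H : c₁ ∉ H)
    (hc₂ : c₂ ∈ Fa G₀ G₁ β) (hc₂H : c₂ ∉ H) (he : e ∈ Fa G₀ G₁ (!β)) (heH : e ∉ H)
    (hd : d ∈ Fa G₀ G₁ β) (hdH : d ∉ H) (i m : ℕ) :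
    Alt G₀ G₁ H β (rep2 c₁ e i ++ rep2 c₂ e m ++ [d]) := by
  refine alt_append (alt_append (alt_rep2 hc₁ hc₁H he heH i) ?_) ?_
  · rw [rep2_length, endP_two_mul]
    exact alt_rep2 hc₂ hc₂H he heH m
  · rw [List.length_append, rep2_length, rep2_length,
      endP_even _ ⟨i + m, by omega⟩]
    exact alt_singleton hd hdH

lemma V_alt {β : Bool} {c₁ c₂ e : G} (hc₁ : c₁ ∈ Fa G₀ G₁ β) (hc₁H : c₁ ∉ H)
    (hc₂ : c₂ ∈ Fa G₀ G₁ β) (hc₂H : c₂ ∉ H) (he : e ∈ Fa G₀ G₁ (!β)) (heH : e ∉ H)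
    (i m : ℕ) :
    Alt G₀ G₁ H β (rep2 c₁ e (i + 1) ++ rep2 c₂ e m) := by
  refine alt_append (alt_rep2 hc₁ hc₁H he heH (i + 1)) ?_
  rw [rep2_length, endP_two_mul]
  exact alt_rep2 hc₂ hc₂H he heH m

lemma U_inv_mul {c₁ c₂ e d d' : G} {i j k : ℕ} (hij : i < j) (hjk : j ≤ k) :
    ∃ s t : ℕ,
      ((rep2 c₁ e i ++ rep2 c₂ e (k - i) ++ [d]).prod)⁻¹ *
        (rep2 c₁ e j ++ rep2 c₂ e (k - j) ++ [d']).prod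
      = d⁻¹ * (((c₂ * e) ^ (s + t + 1))⁻¹ * (c₁ * e) ^ (t + 1) * (c₂ * e) ^ s) * d' := by
  obtain ⟨t, rfl⟩ : ∃ t, j = i + t + 1 := ⟨j - i - 1, by omega⟩
  obtain ⟨s, rfl⟩ : ∃ s, k = i + t + 1 + s := ⟨k - (i + t + 1), by omega⟩
  refine ⟨s, t, ?_⟩
  have h1 : i + t + 1 + s - i = s + t + 1 := by omega
  have h2 : i + t + 1 + s - (i + t + 1) = s := by omega
  rw [h1, h2]
  simp only [List.prod_append, rep2_prod, List.prod_singleton]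
  rw [show i + t + 1 = i + (t + 1) from by omega, pow_add]
  group

lemma V_inv_mul {c₁ c₂ e : G} {i j k : ℕ} (hij : i < j) (hjk : j ≤ k) :
    ∃ s t : ℕ,
      ((rep2 c₁ e (i + 1) ++ rep2 c₂ e (k - i)).prod)⁻¹ *
        (rep2 c₁ e (j + 1) ++ rep2 c₂ e (k - j)).prod
      = ((c₂ * e) ^ (s + t + 1))⁻¹ * (c₁ * e) ^ (t + 1) * (c₂ * e) ^ s := by
  obtain ⟨t, rfl⟩ : ∃ t, j = i + t + 1 := ⟨j - i - 1, by omega⟩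
  obtain ⟨s, rfl⟩ : ∃ s, k = i + t + 1 + s := ⟨k - (i + t + 1), by omega⟩
  refine ⟨s, t, ?_⟩
  have h1 : i + t + 1 + s - i = s + t + 1 := by omega
  have h2 : i + t + 1 + s - (i + t + 1) = s := by omega
  rw [h1, h2]
  simp only [List.prod_append, rep2_prod]
  rw [show i + t + 1 + 1 = i + 1 + (t + 1) from by omega, pow_add]
  group

end Families

section CaseII

lemma caseII (ha : IsAmalgam G₀ G₁ H) {β : Bool}
    (hb2 : H.relIndex (Fa G₀ G₁ β) ≠ 1) (hb3 : H.relIndex (Fa G₀ G₁ β) ≠ 2)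
    (hsm : H.relIndex (Fa G₀ G₁ (!β)) ≠ 1)
    {p : Bool} {f : G} (hf : f ∈ Fa G₀ G₁ p) (hfH : f ∉ H) (k : ℕ) :
    ∃ (D E : Set G) (gfun : ℕ → G), D ∪ E = Set.univ ∧ D ∩ E = ∅ ∧
      ((fun x => f * x) '' D) ∩ D = ∅ ∧
      (∀ i j, 1 ≤ i → i ≤ k → 1 ≤ j → j ≤ k → i ≠ j →
        ((fun x => gfun i * x) '' E) ∩ ((fun x => gfun j * x) '' E) = ∅) := by
  obtain ⟨c₂, hc₂, hc₂H, -⟩ := exists_third (H_le_Fa ha β) hb2 hb3 (one_mem _)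
  obtain ⟨c₁, hc₁, hc₁H, hcc⟩ := exists_third (H_le_Fa ha β) hb2 hb3 hc₂
  obtain ⟨e, he, heH⟩ := exists_notin hsm
  refine ⟨(EE G₀ G₁ H p)ᶜ, EE G₀ G₁ H p, ?_⟩
  have hfD : ∀ x ∈ (EE G₀ G₁ H p)ᶜ, f * x ∈ EE G₀ G₁ H p := by
    intro x hx
    rcases cover3 ha p x with hx' | hx' | hx'
    · refine ⟨[f * x], alt_singleton (mul_mem hf (H_le_Fa ha p hx')) ?_, by simp, by simp⟩
      intro hmem
      exact hfH (by simpa using mul_mem hmem (inv_mem hx'))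
    · exact absurd hx' hx
    · obtain ⟨w, hw, hne, rfl⟩ := hx'
      exact ⟨f :: w, Alt.cons hf hfH hw, by simp, by simp⟩
  have himg : ((fun x => f * x) '' (EE G₀ G₁ H p)ᶜ) ∩ (EE G₀ G₁ H p)ᶜ = ∅ := by
    ext z
    simp only [Set.mem_inter_iff, Set.mem_image, Set.mem_empty_iff_false, iff_false, not_and]
    rintro ⟨x, hx, rfl⟩ hz
    exact hz (hfD x hx)
  have hp : p = (!β) ∨ p = β := by cases p <;> cases β <;> simp
  rcases hp with rfl | rfl
  · -- E = EE (!β) : use the U family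
    refine ⟨fun i => (rep2 c₁ e i ++ rep2 c₂ e (k - i) ++ [c₁]).prod,
      Set.compl_union_self _, Set.compl_inter_self _, himg, ?_⟩
    refine glue (G₀ := G₀) (G₁ := G₁) (H := H) k (A := fun i => {y | ∃ h ∈ H, y = (rep2 c₁ e i ++ rep2 c₂ e (k - i)
        ++ [c₁]).prod * h}) (n := 2 * k + 1) ?_ ?_
    · intro i hi1 hik x hx
      obtain ⟨w, hw, hne, rfl⟩ := hx
      have hlen : (rep2 c₁ e i ++ rep2 c₂ e (k - i) ++ [c₁]).length = 2 * k + 1 := by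
        simp only [List.length_append, rep2_length, List.length_cons, List.length_nil]
        omega
      have := mul_mem_pref (hu := U_alt hc₁ hc₁H hc₂ hc₂H he heH hc₁ hc₁H i (k - i))
        (hw := hw) (hq := by rw [hlen, endP_odd _ ⟨k, rfl⟩])
        (A := {y | ∃ h ∈ H, y = (rep2 c₁ e i ++ rep2 c₂ e (k - i) ++ [c₁]).prod * h})
        ⟨1, one_mem H, (mul_one _).symm⟩
      rwa [hlen] at this
    · intro i j hi1 hik hj1 hjk hij
      refine pref_disjoint ha ?_
      rintro a ⟨h₁, hh₁, rfl⟩ a' ⟨h₂, hh₂, rfl⟩ hmem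
      have he2 : ((rep2 c₁ e i ++ rep2 c₂ e (k - i) ++ [c₁]).prod * h₁)⁻¹ *
          ((rep2 c₁ e j ++ rep2 c₂ e (k - j) ++ [c₁]).prod * h₂)
          = h₁⁻¹ * (((rep2 c₁ e i ++ rep2 c₂ e (k - i) ++ [c₁]).prod)⁻¹ *
            (rep2 c₁ e j ++ rep2 c₂ e (k - j) ++ [c₁]).prod) * h₂ := by group
      rw [he2] at hmem
      have hmid := sandwich (inv_mem hh₁) hh₂ hmem
      obtain ⟨s, t, heq⟩ := U_inv_mul (c₁ := c₁) (c₂ := c₂) (e := e) (d := c₁) (d' := c₁)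
        hij hjk
      rw [heq] at hmid
      exact core_notH ha hc₁ hc₁H hc₂ hc₂H hcc he heH s t (inv_mem hc₁)
        (fun h => hc₁H (by simpa using inv_mem h)) hc₁ hc₁H hmid
  · -- E = EE β : use the V family
    refine ⟨fun i => (rep2 c₁ e (i + 1) ++ rep2 c₂ e (k - i)).prod,
      Set.compl_union_self _, Set.compl_inter_self _, himg, ?_⟩
    refine glue (G₀ := G₀) (G₁ := G₁) (H := H) k (A := fun i => {y | ∃ h ∈ H, y = (rep2 c₁ e (i + 1)
        ++ rep2 c₂ e (k - i)).prod * h}) (n := 2 * k + 2) ?_ ?_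
    · intro i hi1 hik x hx
      obtain ⟨w, hw, hne, rfl⟩ := hx
      have hlen : (rep2 c₁ e (i + 1) ++ rep2 c₂ e (k - i)).length = 2 * k + 2 := by
        simp only [List.length_append, rep2_length]
        omega
      have := mul_mem_pref (hu := V_alt hc₁ hc₁H hc₂ hc₂H he heH i (k - i))
        (hw := hw) (hq := by rw [hlen, endP_even _ ⟨k + 1, by omega⟩])
        (A := {y | ∃ h ∈ H, y = (rep2 c₁ e (i + 1) ++ rep2 c₂ e (k - i)).prod * h})
        ⟨1, one_mem H, (mul_one _).symm⟩
      rwa [hlen] at this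
    · intro i j hi1 hik hj1 hjk hij
      refine pref_disjoint ha ?_
      rintro a ⟨h₁, hh₁, rfl⟩ a' ⟨h₂, hh₂, rfl⟩ hmem
      have he2 : ((rep2 c₁ e (i + 1) ++ rep2 c₂ e (k - i)).prod * h₁)⁻¹ *
          ((rep2 c₁ e (j + 1) ++ rep2 c₂ e (k - j)).prod * h₂)
          = h₁⁻¹ * (((rep2 c₁ e (i + 1) ++ rep2 c₂ e (k - i)).prod)⁻¹ *
            (rep2 c₁ e (j + 1) ++ rep2 c₂ e (k - j)).prod) * h₂ := by group
      rw [he2] at hmem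
      have hmid := sandwich (inv_mem hh₁) hh₂ hmem
      obtain ⟨s, t, heq⟩ := V_inv_mul (c₁ := c₁) (c₂ := c₂) (e := e) hij hjk
      rw [heq] at hmid
      exact core_notH₀ ha hc₁ hc₁H hc₂ hc₂H hcc he heH s t hmid

end CaseII

section CaseI

lemma caseI (ha : IsAmalgam G₀ G₁ H) {β : Bool}
    (hb2 : H.relIndex (Fa G₀ G₁ β) ≠ 1) (hb3 : H.relIndex (Fa G₀ G₁ β) ≠ 2)
    (hsm : H.relIndex (Fa G₀ G₁ (!β)) ≠ 1)
    {v : List G} (hv : Alt G₀ G₁ H (!β) v) (hne : v ≠ []) (hev : Even v.length)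
    (k : ℕ) :
    ∃ (D E : Set G) (gfun : ℕ → G), D ∪ E = Set.univ ∧ D ∩ E = ∅ ∧
      ((fun x => v.prod * x) '' D) ∩ D = ∅ ∧
      (∀ i j, 1 ≤ i → i ≤ k → 1 ≤ j → j ≤ k → i ≠ j →
        ((fun x => gfun i * x) '' E) ∩ ((fun x => gfun j * x) '' E) = ∅) := by
  obtain ⟨c₂, hc₂, hc₂H, -⟩ := exists_third (H_le_Fa ha β) hb2 hb3 (one_mem _)
  obtain ⟨c₁, hc₁, hc₁H, hcc⟩ := exists_third (H_le_Fa ha β) hb2 hb3 hc₂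
  obtain ⟨e, he, heH⟩ := exists_notin hsm
  obtain ⟨x₁, T, rfl⟩ := List.exists_cons_of_ne_nil hne
  cases hv with
  | cons hx₁ hx₁H hT =>
  rw [Bool.not_not] at hT
  have hTne : T ≠ [] := by
    rintro rfl
    simp at hev
  obtain ⟨T', xl, rfl, hT', hxl, hxlH⟩ := alt_concat_decomp hT hTne
  have hlenv : (x₁ :: (T' ++ [xl])).length = T'.length + 2 := by simp
  rw [hlenv] at hev
  have hT'ev : Even T'.length := by
    rcases hev with ⟨m, hm⟩
    exact ⟨m - 1, by omega⟩
  rw [endP_even _ hT'ev] at hxl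
  -- the third coset element `d` with `d ∉ H ∪ H·xl`
  obtain ⟨d₀, hd₀, hd₀H, hd₀x⟩ := exists_third (H_le_Fa ha β) hb2 hb3 (inv_mem hxl)
  set d : G := d₀⁻¹ with hd_def
  have hd : d ∈ Fa G₀ G₁ β := inv_mem hd₀
  have hdH : d ∉ H := fun h => hd₀H (by simpa [hd_def] using inv_mem h)
  have hdx : d * xl⁻¹ ∉ H := by
    intro h
    refine hd₀x ?_
    have := inv_mem h
    simpa [hd_def, mul_inv_rev] using this
  have hfv : (x₁ :: (T' ++ [xl])).prod = x₁ * (T'.prod * xl) := by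
    simp [List.prod_append]
  set S : Set G := {g | ∃ h R, h ∈ H ∧ Alt G₀ G₁ H β R ∧ g = x₁ * (h * R.prod)} with hS_def
  set S' : Set G := {g | ∃ h R, h ∈ H ∧ Alt G₀ G₁ H (!β) R ∧ g = xl⁻¹ * (h * R.prod)}
    with hS'_def
  -- multiplication by `v.prod` sends the complement of `S'` into `S`
  have hfS : ∀ g, g ∉ S' → (x₁ :: (T' ++ [xl])).prod * g ∈ S := by
    intro g hg
    rw [hfv]
    rcases cover3 ha β g with hg' | hg' | hg'
    · refine ⟨1, T' ++ [xl * g], one_mem H, ?_, ?_⟩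
      · refine alt_append hT' ?_
        rw [endP_even _ hT'ev]
        refine alt_singleton (mul_mem hxl (H_le_Fa ha β hg')) ?_
        intro hmem
        exact hxlH (by simpa using mul_mem hmem (inv_mem hg'))
      · rw [List.prod_append, List.prod_singleton]
        group
    · obtain ⟨w, hw, hwne, rfl⟩ := hg'
      obtain ⟨y, R₀, rfl⟩ := List.exists_cons_of_ne_nil hwne
      cases hw with
      | cons hy hyH hR₀ =>
      by_cases hcxy : xl * y ∈ H
      · exact absurd ⟨xl * y, R₀, hcxy, hR₀, by rw [List.prod_cons]; group⟩ hg
      · refine ⟨1, T' ++ ((xl * y) :: R₀), one_mem H, ?_, ?_⟩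
        · refine alt_append hT' ?_
          rw [endP_even _ hT'ev]
          exact Alt.cons (mul_mem hxl hy) hcxy hR₀
        · rw [List.prod_append, List.prod_cons, List.prod_cons]
          group
    · obtain ⟨w, hw, hwne, rfl⟩ := hg'
      refine ⟨1, (T' ++ [xl]) ++ w, one_mem H, ?_, ?_⟩
      · refine alt_append (alt_append hT' ?_) ?_
        · rw [endP_even _ hT'ev]
          exact alt_singleton hxl hxlH
        · rw [List.length_append, List.length_singleton,
            endP_odd _ (by rcases hT'ev with ⟨m, hm⟩; exact ⟨m, by omega⟩)]
          exact hw
      · rw [List.prod_append, List.prod_append, List.prod_singleton]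
        group
  have himg : ((fun x => (x₁ :: (T' ++ [xl])).prod * x) '' (S ∪ S')ᶜ) ∩ (S ∪ S')ᶜ = ∅ := by
    ext z
    simp only [Set.mem_inter_iff, Set.mem_image, Set.mem_empty_iff_false, iff_false, not_and]
    rintro ⟨x, hx, rfl⟩ hz
    exact hz (Or.inl (hfS x (fun hmem => hx (Or.inr hmem))))
  refine ⟨(S ∪ S')ᶜ, S ∪ S',
    fun i => (rep2 c₁ e i ++ rep2 c₂ e (k - i) ++ [d]).prod,
    Set.compl_union_self _, Set.compl_inter_self _, himg, ?_⟩
  refine glue (G₀ := G₀) (G₁ := G₁) (H := H) k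
    (A := fun i => {y | ∃ z h, (z = 1 ∨ z = xl⁻¹) ∧ h ∈ H ∧
      y = (rep2 c₁ e i ++ rep2 c₂ e (k - i) ++ [d]).prod * (z * h)}) (n := 2 * k + 1) ?_ ?_
  · -- translates land in prefix sets
    intro i hi1 hik x hx
    have hlenU : (rep2 c₁ e i ++ rep2 c₂ e (k - i) ++ [d]).length = 2 * k + 1 := by
      simp only [List.length_append, rep2_length, List.length_cons, List.length_nil]
      omega
    rcases hx with hx | hx
    · obtain ⟨h, R, hh, hR, rfl⟩ := hx
      have hxw : x₁ * (h * R.prod) = ((x₁ * h) :: R).prod := by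
        rw [List.prod_cons]; group
      rw [hxw]
      have hw : Alt G₀ G₁ H (!β) ((x₁ * h) :: R) := by
        refine Alt.cons (mul_mem hx₁ (H_le_Fa ha (!β) hh)) ?_ (by rwa [Bool.not_not])
        intro hmem
        exact hx₁H (by simpa using mul_mem hmem (inv_mem hh))
      have := mul_mem_pref (hu := U_alt hc₁ hc₁H hc₂ hc₂H he heH hd hdH i (k - i))
        (hw := hw) (hq := by rw [hlenU, endP_odd _ ⟨k, rfl⟩])
        (A := {y | ∃ z h', (z = 1 ∨ z = xl⁻¹) ∧ h' ∈ H ∧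
          y = (rep2 c₁ e i ++ rep2 c₂ e (k - i) ++ [d]).prod * (z * h')})
        ⟨1, 1, Or.inl rfl, one_mem H, by group⟩
      rwa [hlenU] at this
    · obtain ⟨h, R, hh, hR, rfl⟩ := hx
      set u' : List G := rep2 c₁ e i ++ rep2 c₂ e (k - i) ++ [d * (xl⁻¹ * h)] with hu'_def
      have hu'alt : Alt G₀ G₁ H β u' := by
        refine U_alt hc₁ hc₁H hc₂ hc₂H he heH ?_ ?_ i (k - i)
        · exact mul_mem hd (mul_mem (inv_mem hxl) (H_le_Fa ha β hh))
        · intro hmem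
          refine hdx ?_
          have := mul_mem hmem (inv_mem hh)
          have he2 : d * (xl⁻¹ * h) * h⁻¹ = d * xl⁻¹ := by group
          rwa [he2] at this
      have hlenu' : u'.length = 2 * k + 1 := by
        simp only [hu'_def, List.length_append, rep2_length, List.length_cons,
          List.length_nil]
        omega
      have hprod : (rep2 c₁ e i ++ rep2 c₂ e (k - i) ++ [d]).prod * (xl⁻¹ * (h * R.prod))
          = u'.prod * R.prod := by
        simp only [hu'_def, List.prod_append, List.prod_singleton]
        group
      rw [hprod]
      have := mul_mem_pref (hu := hu'alt) (hw := hR)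
        (hq := by rw [hlenu', endP_odd _ ⟨k, rfl⟩])
        (A := {y | ∃ z h', (z = 1 ∨ z = xl⁻¹) ∧ h' ∈ H ∧
          y = (rep2 c₁ e i ++ rep2 c₂ e (k - i) ++ [d]).prod * (z * h')})
        ⟨xl⁻¹, h, Or.inr rfl, hh, by
          simp only [hu'_def, List.prod_append, List.prod_singleton]
          group⟩
      rwa [hlenu'] at this
  · -- prefix sets are pairwise disjoint
    intro i j hi1 hik hj1 hjk hij
    refine pref_disjoint ha ?_
    rintro a ⟨z₁, h₁, hz₁, hh₁, rfl⟩ a' ⟨z₂, h₂, hz₂, hh₂, rfl⟩ hmem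
    obtain ⟨s, t, heq⟩ := U_inv_mul (c₁ := c₁) (c₂ := c₂) (e := e) (d := d) (d' := d)
      hij hjk
    have he2 : ((rep2 c₁ e i ++ rep2 c₂ e (k - i) ++ [d]).prod * (z₁ * h₁))⁻¹ *
        ((rep2 c₁ e j ++ rep2 c₂ e (k - j) ++ [d]).prod * (z₂ * h₂))
        = h₁⁻¹ * (z₁⁻¹ * (((rep2 c₁ e i ++ rep2 c₂ e (k - i) ++ [d]).prod)⁻¹ *
          (rep2 c₁ e j ++ rep2 c₂ e (k - j) ++ [d]).prod) * z₂) * h₂ := by group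
    rw [he2, heq] at hmem
    have hmid := sandwich (inv_mem hh₁) hh₂ hmem
    have he3 : z₁⁻¹ * (d⁻¹ * (((c₂ * e) ^ (s + t + 1))⁻¹ * (c₁ * e) ^ (t + 1) *
        (c₂ * e) ^ s) * d) * z₂
        = (z₁⁻¹ * d⁻¹) * (((c₂ * e) ^ (s + t + 1))⁻¹ * (c₁ * e) ^ (t + 1) *
          (c₂ * e) ^ s) * (d * z₂) := by group
    rw [he3] at hmid
    have hd₁ : z₁⁻¹ * d⁻¹ ∈ Fa G₀ G₁ β ∧ z₁⁻¹ * d⁻¹ ∉ H := by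
      rcases hz₁ with rfl | rfl
      · exact ⟨by simpa using inv_mem hd, fun h => hdH (by simpa using inv_mem h)⟩
      · refine ⟨by simpa using mul_mem hxl (inv_mem hd), fun h => hdx ?_⟩
        have := inv_mem h
        simpa [mul_inv_rev] using this
    have hd₂ : d * z₂ ∈ Fa G₀ G₁ β ∧ d * z₂ ∉ H := by
      rcases hz₂ with rfl | rfl
      · exact ⟨by simpa using hd, by simpa using hdH⟩
      · exact ⟨mul_mem hd (inv_mem hxl), hdx⟩
    exact core_notH ha hc₁ hc₁H hc₂ hc₂H hcc he heH s t hd₁.1 hd₁.2 hd₂.1 hd₂.2 hmid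

end CaseI

section Reduce

variable (G₀ G₁ H) in
def Good (β : Bool) (g : G) : Prop :=
  (∃ q : Bool, g ∈ Fa G₀ G₁ q ∧ g ∉ H) ∨
    (∃ v : List G, Alt G₀ G₁ H (!β) v ∧ v ≠ [] ∧ Even v.length ∧ v.prod = g)

lemma cyc (ha : IsAmalgam G₀ G₁ H) (β : Bool) :
    ∀ n : ℕ, ∀ (w : List G) (b : Bool), w.length ≤ n → Alt G₀ G₁ H b w → w ≠ [] →
      ∃ r : G, Good G₀ G₁ H β (r⁻¹ * w.prod * r) := by
  intro n
  induction n with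
  | zero =>
      intro w b hlen hw hne
      rw [Nat.le_zero, List.length_eq_zero_iff] at hlen
      exact absurd hlen hne
  | succ n ih =>
      intro w b hlen hw hne
      obtain ⟨x, T, rfl⟩ := List.exists_cons_of_ne_nil hne
      cases hw with
      | cons hx hxH hT =>
      rcases eq_or_ne T [] with rfl | hTne
      · exact ⟨1, Or.inl ⟨b, by simpa using hx, by simpa using hxH⟩⟩
      obtain ⟨T'', z, rfl, hT'', hz, hzH⟩ := alt_concat_decomp hT hTne
      by_cases hLev : Even T''.length
      · -- even length word : no cyclic reduction needed, shift if necessary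
        by_cases hbβ : b = (!β)
        · subst hbβ
          refine ⟨1, Or.inr ⟨x :: (T'' ++ [z]), Alt.cons hx hxH hT, by simp,
            ?_, by group⟩⟩
          obtain ⟨m, hm⟩ := hLev
          refine ⟨m + 1, ?_⟩
          simp only [List.length_cons, List.length_append, List.length_singleton,
            List.length_nil, hm]
          omega
        · have hb : b = β := by
            revert hbβ
            cases b <;> cases β <;> simp
          subst hb
          refine ⟨x, Or.inr ⟨(T'' ++ [z]) ++ [x], ?_, by simp, ?_, ?_⟩⟩
          · refine alt_append hT ?_
            rw [List.length_append, List.length_singleton,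
              endP_odd _ (by rcases hLev with ⟨m, hm⟩; exact ⟨m, by omega⟩),
              Bool.not_not]
            exact alt_singleton hx hxH
          · obtain ⟨m, hm⟩ := hLev
            refine ⟨m + 1, ?_⟩
            simp only [List.length_append, List.length_singleton, List.length_nil,
              List.length_cons, hm]
            omega
          · simp only [List.prod_cons, List.prod_append, List.prod_singleton,
              List.prod_nil]
            group
      · -- odd length : merge the last letter into the first
        have hzb : z ∈ Fa G₀ G₁ b := by
          rw [endP_odd _ (Nat.not_even_iff_odd.1 hLev), Bool.not_not] at hz
          exact hz
        by_cases hzx : z * x ∈ H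
        · -- full cancellation of both letters
          have hT''ne : T'' ≠ [] := by
            rintro rfl
            simp at hLev
          obtain ⟨T₃, z₂, rfl, hT₃, hz₂, hz₂H⟩ := alt_concat_decomp hT'' hT''ne
          have hT₃ev : Even T₃.length := by
            have h' : ¬ Even (T₃.length + 1) := by
              simpa using hLev
            simpa [Nat.even_add_one] using h'
          rw [endP_even _ hT₃ev] at hz₂
          have hvalt : Alt G₀ G₁ H (!b) (T₃ ++ [z₂ * (z * x)]) := by
            refine alt_append hT₃ ?_
            rw [endP_even _ hT₃ev]
            refine alt_singleton (mul_mem hz₂ (H_le_Fa ha (!b) hzx)) ?_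
            intro hmem
            have h2 := mul_mem hmem (inv_mem hzx)
            have he : z₂ * (z * x) * (z * x)⁻¹ = z₂ := by group
            rw [he] at h2
            exact hz₂H h2
          have hvlen : (T₃ ++ [z₂ * (z * x)]).length ≤ n := by
            simp only [List.length_cons, List.length_append, List.length_singleton] at hlen ⊢
            omega
          obtain ⟨r', hr'⟩ := ih (T₃ ++ [z₂ * (z * x)]) (!b) hvlen hvalt (by simp)
          refine ⟨x * r', ?_⟩
          have heq : (x * r')⁻¹ * (x :: ((T₃ ++ [z₂]) ++ [z])).prod * (x * r')
              = r'⁻¹ * (T₃ ++ [z₂ * (z * x)]).prod * r' := by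
            simp only [List.prod_cons, List.prod_append, List.prod_singleton,
              List.prod_nil]
            group
          rw [heq]
          exact hr'
        · -- merge without cancellation
          have hvalt : Alt G₀ G₁ H (!b) (T'' ++ [z * x]) := by
            refine alt_append hT'' ?_
            rw [endP_odd _ (Nat.not_even_iff_odd.1 hLev), Bool.not_not]
            exact alt_singleton (mul_mem hzb hx) hzx
          have hvlen : (T'' ++ [z * x]).length ≤ n := by
            simp only [List.length_cons, List.length_append, List.length_singleton] at hlen ⊢
            omega
          obtain ⟨r', hr'⟩ := ih (T'' ++ [z * x]) (!b) hvlen hvalt (by simp)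
          refine ⟨x * r', ?_⟩
          have heq : (x * r')⁻¹ * (x :: (T'' ++ [z])).prod * (x * r')
              = r'⁻¹ * (T'' ++ [z * x]).prod * r' := by
            simp only [List.prod_cons, List.prod_append, List.prod_singleton,
              List.prod_nil]
            group
          rw [heq]
          exact hr'

end Reduce

section Final

lemma transport {f r c : G} {k : ℕ} (hc : c = r⁻¹ * f * r)
    (h : ∃ (D E : Set G) (gfun : ℕ → G), D ∪ E = Set.univ ∧ D ∩ E = ∅ ∧
      ((fun x => c * x) '' D) ∩ D = ∅ ∧
      (∀ i j, 1 ≤ i → i ≤ k → 1 ≤ j → j ≤ k → i ≠ j →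
        ((fun x => gfun i * x) '' E) ∩ ((fun x => gfun j * x) '' E) = ∅)) :
    ∃ (D E : Set G) (gfun : ℕ → G), D ∪ E = Set.univ ∧ D ∩ E = ∅ ∧
      ((fun x => f * x) '' D) ∩ D = ∅ ∧
      (∀ i j, 1 ≤ i → i ≤ k → 1 ≤ j → j ≤ k → i ≠ j →
        ((fun x => gfun i * x) '' E) ∩ ((fun x => gfun j * x) '' E) = ∅) := by
  subst hc
  obtain ⟨D, E, gf, hDE, hDEi, hfD, hg⟩ := h
  refine ⟨(fun x => r * x) '' D, (fun x => r * x) '' E, fun i => gf i * r⁻¹, ?_, ?_, ?_, ?_⟩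
  · ext z
    simp only [Set.mem_union, Set.mem_image, Set.mem_univ, iff_true]
    have hz : r⁻¹ * z ∈ D ∪ E := by rw [hDE]; trivial
    rcases hz with hz | hz
    · exact Or.inl ⟨r⁻¹ * z, hz, by group⟩
    · exact Or.inr ⟨r⁻¹ * z, hz, by group⟩
  · ext z
    simp only [Set.mem_inter_iff, Set.mem_image, Set.mem_empty_iff_false, iff_false, not_and]
    rintro ⟨x, hx, rfl⟩ ⟨y, hy, hee⟩
    have hyx : y = x := mul_left_cancel hee
    subst hyx
    have : y ∈ D ∩ E := ⟨hx, hy⟩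
    rw [hDEi] at this
    exact this
  · ext z
    simp only [Set.mem_inter_iff, Set.mem_image, Set.mem_empty_iff_false, iff_false, not_and]
    rintro ⟨x, ⟨y, hyD, rfl⟩, rfl⟩ ⟨u, huD, heq⟩
    have hu : u = (r⁻¹ * f * r) * y := by
      apply mul_left_cancel (a := r)
      rw [heq]
      group
    have : (r⁻¹ * f * r) * y ∈ ((fun x => (r⁻¹ * f * r) * x) '' D) ∩ D :=
      ⟨⟨y, hyD, rfl⟩, hu ▸ huD⟩
    rw [hfD] at this
    exact this
  · intro i j hi1 hik hj1 hjk hij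
    have himg : ∀ g : G, ((fun x => (g * r⁻¹) * x) '' ((fun x => r * x) '' E))
        = (fun x => g * x) '' E := by
      intro g
      rw [Set.image_image]
      refine Set.image_congr' ?_
      intro x
      group
    rw [himg, himg]
    exact hg i j hi1 hik hj1 hjk hij

end Final

end Amalgam

end WSP

/-- Let `G = G₀ *_H G₁` be a nondegenerate free product with amalgamation and suppose that
the kernel `ker G = ⋂_{g ∈ G} g H g⁻¹` is trivial. Then `G` is a weak* Powers group. -/
theorem weakStarPowers_of_trivial_kernel {G : Type*} [Group G] (G₀ G₁ H : Subgroup G)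
    (ha : IsAmalgam G₀ G₁ H) (hnd : Nondegenerate G₀ G₁ H)
    (hker : amalgamKerSet H = {1}) :
    IsWeakStarPowersGroup G := by
  intro f hf k hk
  -- choose the factor with at least three cosets
  obtain ⟨β, hb2, hb3, hsm⟩ : ∃ β : Bool, H.relIndex (WSP.Fa G₀ G₁ β) ≠ 1 ∧
      H.relIndex (WSP.Fa G₀ G₁ β) ≠ 2 ∧ H.relIndex (WSP.Fa G₀ G₁ (!β)) ≠ 1 := by
    by_cases h0 : H.relIndex G₀ = 2
    · have h1 : H.relIndex G₁ ≠ 2 := fun h => hnd.2.2 ⟨h0, h⟩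
      exact ⟨true, hnd.2.1, h1, hnd.1⟩
    · exact ⟨false, hnd.1, h0, hnd.2.1⟩
  -- a conjugate of `f` outside `H`
  have hstep : ∃ r₀ : G, r₀⁻¹ * f * r₀ ∉ H := by
    by_contra hcon
    push_neg at hcon
    have hfk : f ∈ amalgamKerSet H := Set.mem_iInter.2 fun g => hcon g
    rw [hker] at hfk
    exact hf hfk
  obtain ⟨r₀, hr₀⟩ := hstep
  -- a word representing it
  have hword : ∃ (b : Bool) (w : List G), WSP.Alt G₀ G₁ H b w ∧ w ≠ [] ∧
      w.prod = r₀⁻¹ * f * r₀ := by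
    rcases WSP.cover ha (r₀⁻¹ * f * r₀) with (h | h) | h
    · exact absurd h hr₀
    · obtain ⟨w, hw, hne, hp⟩ := h
      exact ⟨false, w, hw, hne, hp⟩
    · obtain ⟨w, hw, hne, hp⟩ := h
      exact ⟨true, w, hw, hne, hp⟩
  obtain ⟨b, w, hw, hne, hwp⟩ := hword
  -- cyclically reduce
  obtain ⟨r₁, hGood⟩ := WSP.cyc ha β w.length w b le_rfl hw hne
  rw [hwp] at hGood
  rcases hGood with ⟨q, hq, hqH⟩ | ⟨v, hv, hvne, hvev, hvp⟩
  · -- elliptic case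
    refine WSP.transport (r := r₀ * r₁)
      (c := r₁⁻¹ * (r₀⁻¹ * f * r₀) * r₁) (by group) ?_
    exact WSP.caseII ha hb2 hb3 hsm hq hqH k
  · -- hyperbolic case
    refine WSP.transport (r := r₀ * r₁)
      (c := r₁⁻¹ * (r₀⁻¹ * f * r₀) * r₁) (by group) ?_
    rw [← hvp]
    exact WSP.caseI ha hb2 hb3 hsm hv hvne hvev k
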